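/- Let E be a complex Hilbert space, let W be a finite-dimensional complex vector space with basis (𝔞_j)_{j=1,…,r}, and let w be a nonzero continuous linear functional on E. Equip the algebraic tensor product W ⊗[ℂ] E' (E' the continuous dual of E) with the right action of compact operators given on simple tensors by (α ⊗ f) · a = α ⊗ (f ∘ a). Then for every v ∈ W ⊗[ℂ] E' there exist compact operators a_1, …, a_r on E such that v = Σ_{j=1}^r (𝔞_j ⊗ w) · a_j = Σ_{j=1}^r 𝔞_j ⊗ (w ∘ a_j). In particular, the finite set {𝔞_j ⊗ w : j = 1, …, r} generates W ⊗[ℂ] E' under the action of compact operators. -/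

import Mathlib

open TensorProduct

/-- rank-one smulRight operators are compact. -/
lemma smulRight_isCompactOperator
    {E : Type*} [NormedAddCommGroup E] [InnerProductSpace ℂ E]
    (f : E →L[ℂ] ℂ) (x : E) :
    IsCompactOperator (f.smulRight x) := by
  have h1 : IsCompactOperator (ContinuousLinearMap.toSpanSingleton ℂ x) := by
    refine ⟨(ContinuousLinearMap.toSpanSingleton ℂ x) '' (Metric.closedBall 0 1), ?_, ?_⟩
    · exact (isCompact_closedBall 0 1).image (ContinuousLinearMap.toSpanSingleton ℂ x).continuous
    · exact Filter.mem_of_superset (Metric.closedBall_mem_nhds 0 one_pos)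
        (Set.subset_preimage_image _ _)
  have h2 := h1.comp_clm f
  have heq : ⇑(f.smulRight x) = ⇑(ContinuousLinearMap.toSpanSingleton ℂ x) ∘ ⇑f := by
    funext z
    simp [ContinuousLinearMap.toSpanSingleton_apply]
  exact heq ▸ h2

lemma basis_tensor_decomp
    {W : Type*} [AddCommGroup W] [Module ℂ W]
    {M : Type*} [AddCommGroup M] [Module ℂ M]
    {r : ℕ} (𝔞 : Module.Basis (Fin r) ℂ W) (v : W ⊗[ℂ] M) :
    v = ∑ j : Fin r, (𝔞 j) ⊗ₜ[ℂ]
      ((TensorProduct.lid ℂ M).toLinearMap.comp (LinearMap.rTensor M (𝔞.coord j)) v) := by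
  induction v using TensorProduct.induction_on with
  | zero => simp
  | tmul x m =>
    simp only [LinearMap.comp_apply, LinearMap.rTensor_tmul, LinearEquiv.coe_coe, lid_tmul]
    simp_rw [← TensorProduct.smul_tmul]
    rw [← TensorProduct.sum_tmul]
    congr 1
    simp only [Module.Basis.coord_apply]
    exact (𝔞.sum_repr x).symm
  | add x y hx hy =>
    conv_lhs => rw [hx, hy]
    simp [map_add, TensorProduct.tmul_add, Finset.sum_add_distrib]

/-- Every element of `W ⊗[ℂ] E'` is generated by the finite set `{𝔞_j ⊗ w}` under
the right action `(α ⊗ f) · a = α ⊗ (f ∘ a)` of compact operators. -/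
theorem finite_generation_of_tensor_dual
    {E : Type*} [NormedAddCommGroup E] [InnerProductSpace ℂ E] [CompleteSpace E]
    {W : Type*} [AddCommGroup W] [Module ℂ W] [FiniteDimensional ℂ W]
    {r : ℕ} (𝔞 : Module.Basis (Fin r) ℂ W)
    (w : E →L[ℂ] ℂ) (hw : w ≠ 0)
    (v : W ⊗[ℂ] (E →L[ℂ] ℂ)) :
    ∃ a : Fin r → (E →L[ℂ] E),
      (∀ j, IsCompactOperator (a j)) ∧
      v = ∑ j : Fin r, (𝔞 j) ⊗ₜ[ℂ] (w.comp (a j)) := by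
  obtain ⟨x, hx⟩ : ∃ x, w x ≠ 0 := by
    by_contra h
    push_neg at h
    exact hw (by ext z; simp [h z])
  set x' : E := (w x)⁻¹ • x with hx'
  have hwx' : w x' = 1 := by
    simp [hx', map_smul, inv_mul_cancel₀ hx]
  set φ : Fin r → (E →L[ℂ] ℂ) := fun j =>
    (TensorProduct.lid ℂ (E →L[ℂ] ℂ)).toLinearMap.comp (LinearMap.rTensor _ (𝔞.coord j)) v
    with hφ
  refine ⟨fun j => (φ j).smulRight x', fun j => smulRight_isCompactOperator _ _, ?_⟩
  have hcomp : ∀ j, w.comp ((φ j).smulRight x') = φ j := by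
    intro j
    ext z
    simp [ContinuousLinearMap.smulRight_apply, map_smul, hwx']
  simp only [hcomp]
  exact basis_tensor_decomp 𝔞 v
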